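/- Let V be a real vector space, 𝔯 ⊆ ℝ[S_r] a right ideal, and 𝔩 := 𝔯* = {a* : a ∈ 𝔯} the corresponding left ideal. Suppose x : S_r → ℝ satisfies Σ_{p∈S_r} h(p)·x(p) = 0 for every h ∈ 𝔩, where h(p) denotes the coefficient of p in h. Then for every tensor T in the symmetry class of 𝔯, i.e. every r-multilinear map of the form T = aT' with a ∈ 𝔯 and T' : V^r → ℝ r-multilinear, and for all v_1,…,v_r ∈ V, one has Σ_{p∈S_r} x(p)·T(v_{p(1)},…,v_{p(r)}) = 0. -/

import Mathlib

/-- Action of a group ring element `a ∈ ℝ[S_r]` on an `r`-multilinear map: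
`(aT)(v₁,…,v_r) = Σ_p a(p)·T(v_{p(1)},…,v_{p(r)})`. -/
noncomputable def gact {V : Type} [AddCommGroup V] [Module ℝ V] {r : ℕ}
    (a : MonoidAlgebra ℝ (Equiv.Perm (Fin r)))
    (T : MultilinearMap ℝ (fun _ : Fin r => V) ℝ) :
    MultilinearMap ℝ (fun _ : Fin r => V) ℝ :=
  ∑ p : Equiv.Perm (Fin r), a.coeff p • T.domDomCongr p
/-- The star map `a* := Σ_p a(p)·p⁻¹` on the group ring `ℝ[S_r]`. -/
noncomputable def astar {r : ℕ} (a : MonoidAlgebra ℝ (Equiv.Perm (Fin r))) :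
    MonoidAlgebra ℝ (Equiv.Perm (Fin r)) :=
  MonoidAlgebra.ofCoeff (Finsupp.equivFunOnFinite.symm (fun p => a.coeff p⁻¹))

/-- A right ideal of a ring `M`, as a set: an additive subgroup with `𝔯·M ⊆ 𝔯`. -/
def IsRightIdeal {M : Type} [Ring M] (s : Set M) : Prop :=
  (0 : M) ∈ s ∧ (∀ x ∈ s, ∀ y ∈ s, x + y ∈ s) ∧ (∀ x ∈ s, -x ∈ s) ∧
    ∀ x ∈ s, ∀ m : M, x * m ∈ s

/-- Let `𝔯 ⊆ ℝ[S_r]` be a right ideal and `𝔩 := 𝔯* = {a* : a ∈ 𝔯}`. If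
`x : S_r → ℝ` satisfies `Σ_p h(p)·x(p) = 0` for every `h ∈ 𝔩`, then every tensor
`T = aT'` of the symmetry class of `𝔯` (`a ∈ 𝔯`, `T'` r-multilinear) satisfies
`Σ_p x(p)·T(v_{p(1)},…,v_{p(r)}) = 0` for all `v₁,…,v_r ∈ V`. -/
theorem stmt_19 (V : Type) [AddCommGroup V] [Module ℝ V] {r : ℕ}
    (𝔯 : Set (MonoidAlgebra ℝ (Equiv.Perm (Fin r)))) (h𝔯 : IsRightIdeal 𝔯)
    (x : Equiv.Perm (Fin r) → ℝ)
    (hx : ∀ h ∈ astar '' 𝔯, ∑ p : Equiv.Perm (Fin r), h.coeff p * x p = 0) :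
    ∀ a ∈ 𝔯, ∀ T' : MultilinearMap ℝ (fun _ : Fin r => V) ℝ, ∀ v : Fin r → V,
      ∑ p : Equiv.Perm (Fin r), x p * (gact a T') (fun i => v (p i)) = 0 := by
  intro a ha T' v
  have key : ∀ s : Equiv.Perm (Fin r),
      ∑ p : Equiv.Perm (Fin r), x p * a.coeff (p⁻¹ * s) = 0 := by
    intro s
    have hb : a * MonoidAlgebra.single s⁻¹ (1 : ℝ) ∈ 𝔯 := h𝔯.2.2.2 a ha _
    have h0 := hx _ ⟨_, hb, rfl⟩
    rw [← h0]
    apply Finset.sum_congr rfl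
    intro p _
    rw [mul_comm]
    congr 1
    symm
    show (MonoidAlgebra.ofCoeff (Finsupp.equivFunOnFinite.symm
        fun q => (a * MonoidAlgebra.single s⁻¹ (1 : ℝ)).coeff q⁻¹)).coeff p = a.coeff (p⁻¹ * s)
    simp [MonoidAlgebra.coeff_mul_single_apply]
  have expand : ∀ p : Equiv.Perm (Fin r), (gact a T') (fun i => v (p i))
      = ∑ s : Equiv.Perm (Fin r), a.coeff (p⁻¹ * s) * T' (fun i => v (s i)) := by
    intro p
    unfold gact
    rw [MultilinearMap.sum_apply]
    rw [← Equiv.sum_comp (Equiv.mulLeft p⁻¹)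
      (fun q => (a.coeff q • T'.domDomCongr q) (fun i => v (p i)))]
    apply Finset.sum_congr rfl
    intro s _
    simp [MultilinearMap.domDomCongr_apply, Equiv.Perm.mul_apply]
  calc ∑ p : Equiv.Perm (Fin r), x p * (gact a T') (fun i => v (p i))
      = ∑ p : Equiv.Perm (Fin r), ∑ s : Equiv.Perm (Fin r),
          x p * a.coeff (p⁻¹ * s) * T' (fun i => v (s i)) := by
        simp_rw [expand, Finset.mul_sum, mul_assoc]
    _ = ∑ s : Equiv.Perm (Fin r),
          (∑ p : Equiv.Perm (Fin r), x p * a.coeff (p⁻¹ * s)) * T' (fun i => v (s i)) := by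
        rw [Finset.sum_comm]; simp_rw [Finset.sum_mul]
    _ = 0 := by simp [key]
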